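/- (Infinite-dimensional representation theorem.) Let ι be an infinite type and let A be a transposition algebra of dimension ι. Let S be the set of bijections σ : ι → ι with {i : σ(i) ≠ i} finite. Then for every nonzero a ∈ A there is a homomorphism h : A → 𝒫(S) with h(a) ≠ ∅, where h(x ⊓ y) = h(x) ∩ h(y), h(xᶜ) = S ∖ h(x), h(1) = S, and h(s_{ij}x) = {σ ∈ S : σ ∘ [i,j] ∈ h(x)} for all i ≠ j in ι. -/

import Mathlib

/-- A transposition algebra with dimensions indexed by `ι`: a Boolean algebra with unary
operations `s i j` (for `i ≠ j`) satisfying the equation set `Σ_ι`. -/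
structure TranspositionAlgebra (ι : Type*) (A : Type*) [BooleanAlgebra A] where
  s : ι → ι → A → A
  map_inf : ∀ i j : ι, i ≠ j → ∀ x y : A, s i j (x ⊓ y) = s i j x ⊓ s i j y
  map_compl : ∀ i j : ι, i ≠ j → ∀ x : A, s i j xᶜ = (s i j x)ᶜ
  symm : ∀ i j : ι, i ≠ j → s i j = s j i
  invol : ∀ i j : ι, i ≠ j → ∀ x : A, s i j (s i j x) = x
  comm : ∀ i j k l : ι, i ≠ j → k ≠ l → i ≠ k → i ≠ l → j ≠ k → j ≠ l →
    ∀ x : A, s i j (s k l x) = s k l (s i j x)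
  braid : ∀ i j k : ι, i ≠ j → j ≠ k → i ≠ k →
    ∀ x : A, s i j (s j k (s i j x)) = s i k x

namespace TARep

variable {ι : Type*} [DecidableEq ι] {A : Type*} [BooleanAlgebra A]

def msupp (σ : Equiv.Perm ι) : Set ι := {i | σ i ≠ i}

lemma msupp_swap_mul_subset (σ : Equiv.Perm ι) {c : ι} (h : σ c ≠ c) :
    msupp (Equiv.swap c (σ c) * σ) ⊆ msupp σ \ {c} := by
  intro k hk
  have hkc : k ≠ c := by
    rintro rfl; exact hk (by simp [msupp, Equiv.Perm.mul_apply])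
  simp only [Set.mem_diff, Set.mem_singleton_iff, msupp, Set.mem_setOf_eq]
  refine ⟨fun hσk => ?_, hkc⟩
  have hkd : k ≠ σ c := fun h' => hkc (σ.injective (hσk.trans h'))
  apply hk
  show (Equiv.swap c (σ c) * σ) k = k
  rw [Equiv.Perm.mul_apply, hσk, Equiv.swap_apply_of_ne_of_ne hkc hkd]

lemma msupp_mul_swap_subset (σ : Equiv.Perm ι) (i j : ι) :
    msupp (σ * Equiv.swap i j) ⊆ msupp σ ∪ {i, j} := by
  intro k hk
  by_cases h1 : σ k = k
  · right
    by_contra h2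
    simp only [Set.mem_insert_iff, Set.mem_singleton_iff, not_or] at h2
    exact hk (by simp only [msupp, Set.mem_setOf_eq, Equiv.Perm.mul_apply,
      Equiv.swap_apply_of_ne_of_ne h2.1 h2.2, h1, ne_eq, not_true_eq_false, not_false_eq_true,
      not_not])
  · left; exact h1

lemma msupp_swap_mul_subset' (σ : Equiv.Perm ι) (i j : ι) :
    msupp (Equiv.swap i j * σ) ⊆ msupp σ ∪ {i, j} := by
  intro k hk
  by_cases h1 : σ k = k
  · right
    by_contra h2
    simp only [Set.mem_insert_iff, Set.mem_singleton_iff, not_or] at h2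
    exact hk (by simp only [msupp, Set.mem_setOf_eq, Equiv.Perm.mul_apply, h1,
      Equiv.swap_apply_of_ne_of_ne h2.1 h2.2, ne_eq, not_true_eq_false, not_false_eq_true, not_not])
  · left; exact h1

open Classical in
noncomputable def gA (M : TranspositionAlgebra ι A) : ℕ → Equiv.Perm ι → A → A
  | 0, _ => id
  | n+1, σ =>
    if h : ∃ c, σ c ≠ c then
      M.s h.choose (σ h.choose) ∘ gA M n (Equiv.swap h.choose (σ h.choose) * σ)
    else id

variable (M : TranspositionAlgebra ι A)

lemma gA_fixed (n : ℕ) (σ : Equiv.Perm ι) (h : ¬ ∃ c, σ c ≠ c) : gA M n σ = id := by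
  cases n <;> simp [gA, h]

lemma ncard_lt_of_moved {σ : Equiv.Perm ι} (hfin : (msupp σ).Finite)
    {c : ι} (hc : σ c ≠ c) :
    (msupp (Equiv.swap c (σ c) * σ)).Finite ∧
    (msupp (Equiv.swap c (σ c) * σ)).ncard < (msupp σ).ncard := by
  have hsub := msupp_swap_mul_subset σ hc
  have hfin' : (msupp σ \ {c}).Finite := hfin.diff
  constructor
  · exact hfin'.subset hsub
  · calc (msupp (Equiv.swap c (σ c) * σ)).ncard
        ≤ (msupp σ \ {c}).ncard := Set.ncard_le_ncard hsub hfin'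
      _ < (msupp σ).ncard := by
          apply Set.ncard_lt_ncard _ hfin
          exact Set.sdiff_singleton_ssubset.mpr hc

lemma ncard_lt_of_choose {σ : Equiv.Perm ι} (hfin : (msupp σ).Finite)
    (h : ∃ c, σ c ≠ c) :
    (msupp (Equiv.swap h.choose (σ h.choose) * σ)).Finite ∧
    (msupp (Equiv.swap h.choose (σ h.choose) * σ)).ncard < (msupp σ).ncard :=
  ncard_lt_of_moved hfin h.choose_spec

lemma gA_stable (n : ℕ) : ∀ (m : ℕ) (σ : Equiv.Perm ι), (msupp σ).Finite →
    (msupp σ).ncard ≤ n → (msupp σ).ncard ≤ m → gA M n σ = gA M m σ := by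
  induction n with
  | zero =>
    intro m σ hfin h0 _
    have hemp : msupp σ = ∅ := by
      rw [← Set.ncard_eq_zero hfin]; omega
    have : ¬ ∃ c, σ c ≠ c := by
      rintro ⟨c, hc⟩
      exact absurd (hemp ▸ hc : c ∈ (∅ : Set ι)) (Set.notMem_empty c)
    rw [gA_fixed M _ _ this, gA_fixed M _ _ this]
  | succ n IH =>
    intro m σ hfin hn hm
    by_cases h : ∃ c, σ c ≠ c
    · have hc : σ h.choose ≠ h.choose := h.choose_spec
      have hpos : 0 < (msupp σ).ncard := by
        rw [Set.ncard_pos hfin]; exact ⟨h.choose, hc⟩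
      obtain ⟨m', rfl⟩ : ∃ m', m = m' + 1 := by
        cases m
        · omega
        · exact ⟨_, rfl⟩
      obtain ⟨hfin', hlt⟩ := ncard_lt_of_choose hfin h
      simp only [gA, dif_pos h]
      rw [IH m' _ hfin' (by omega) (by omega)]
    · rw [gA_fixed M _ _ h, gA_fixed M _ _ h]

noncomputable def G (σ : Equiv.Perm ι) : A → A := gA M (msupp σ).ncard σ

lemma G_fixed (σ : Equiv.Perm ι) (h : ¬ ∃ c, σ c ≠ c) : G M σ = id :=
  gA_fixed M _ _ h

lemma G_one : G M (1 : Equiv.Perm ι) = id :=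
  G_fixed M 1 (by simp)

lemma G_unfold (σ : Equiv.Perm ι) (hfin : (msupp σ).Finite) (h : ∃ c, σ c ≠ c) :
    G M σ = M.s h.choose (σ h.choose) ∘ G M (Equiv.swap h.choose (σ h.choose) * σ) := by
  have hc : σ h.choose ≠ h.choose := h.choose_spec
  have hpos : 0 < (msupp σ).ncard := by
    rw [Set.ncard_pos hfin]; exact ⟨h.choose, hc⟩
  obtain ⟨k, hk⟩ : ∃ k, (msupp σ).ncard = k + 1 := ⟨_, (Nat.succ_pred_eq_of_pos hpos).symm⟩
  obtain ⟨hfin', hlt⟩ := ncard_lt_of_choose hfin h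
  rw [G, hk]
  simp only [gA, dif_pos h]
  rw [G]
  rw [gA_stable M k ((msupp (Equiv.swap h.choose (σ h.choose) * σ)).ncard)
    (Equiv.swap h.choose (σ h.choose) * σ) hfin' (by omega) le_rfl]


lemma swap_swap_comm (a b c d : ι) (h3 : a ≠ c) (h4 : a ≠ d) (h5 : b ≠ c) (h6 : b ≠ d) :
    Equiv.swap a b * Equiv.swap c d = Equiv.swap c d * Equiv.swap a b := by
  ext k
  simp only [Equiv.Perm.mul_apply, Equiv.swap_apply_def]
  split_ifs <;> simp_all

lemma swap_braid1 (i j e : ι) (h1 : i ≠ j) (h2 : i ≠ e) (h3 : j ≠ e) :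
    Equiv.swap i e * Equiv.swap i j = Equiv.swap e j * Equiv.swap i e := by
  ext k
  simp only [Equiv.Perm.mul_apply, Equiv.swap_apply_def]
  split_ifs <;> simp_all

lemma swap_braid2 (c i j : ι) (h1 : i ≠ j) (h2 : c ≠ i) (h3 : c ≠ j) :
    Equiv.swap c i * Equiv.swap i j = Equiv.swap i j * Equiv.swap c j := by
  ext k
  simp only [Equiv.Perm.mul_apply, Equiv.swap_apply_def]
  split_ifs <;> simp_all

lemma swap_braid3 (c i j : ι) (h1 : i ≠ j) (h2 : c ≠ i) (h3 : c ≠ j) :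
    Equiv.swap c j * Equiv.swap i j = Equiv.swap i j * Equiv.swap c i := by
  ext k
  simp only [Equiv.Perm.mul_apply, Equiv.swap_apply_def]
  split_ifs <;> simp_all

/-- Derived braid identity: `s i j (s j k y) = s i k (s i j y)`. -/
lemma sD (i j k : ι) (hij : i ≠ j) (hjk : j ≠ k) (hik : i ≠ k) (y : A) :
    M.s i j (M.s j k y) = M.s i k (M.s i j y) := by
  have h := M.braid i j k hij hjk hik (M.s i j y)
  rwa [M.invol i j hij y] at h

/-- `G` preserves `⊓` and `ᶜ`. -/
lemma G_hom (n : ℕ) : ∀ σ : Equiv.Perm ι, (msupp σ).Finite → (msupp σ).ncard ≤ n →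
    (∀ x y : A, G M σ (x ⊓ y) = G M σ x ⊓ G M σ y) ∧
    (∀ x : A, G M σ xᶜ = (G M σ x)ᶜ) := by
  induction n with
  | zero =>
    intro σ hfin h0
    have hemp : msupp σ = ∅ := by rw [← Set.ncard_eq_zero hfin]; omega
    have h : ¬ ∃ c, σ c ≠ c := by
      rintro ⟨c, hc⟩; exact absurd (hemp ▸ hc : c ∈ (∅ : Set ι)) (Set.notMem_empty c)
    rw [G_fixed M σ h]
    exact ⟨fun _ _ => rfl, fun _ => rfl⟩
  | succ n IH =>
    intro σ hfin hn
    by_cases h : ∃ c, σ c ≠ c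
    · have hc : σ h.choose ≠ h.choose := h.choose_spec
      have hcd : h.choose ≠ σ h.choose := Ne.symm hc
      obtain ⟨hfin', hlt⟩ := ncard_lt_of_choose hfin h
      obtain ⟨IH1, IH2⟩ := IH _ hfin' (by omega)
      rw [G_unfold M σ hfin h]
      constructor
      · intro x y
        simp only [Function.comp_apply, IH1 x y, M.map_inf _ _ hcd]
      · intro x
        simp only [Function.comp_apply, IH2 x, M.map_compl _ _ hcd]
    · rw [G_fixed M σ h]
      exact ⟨fun _ _ => rfl, fun _ => rfl⟩

lemma G_inf (σ : Equiv.Perm ι) (hfin : (msupp σ).Finite) (x y : A) :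
    G M σ (x ⊓ y) = G M σ x ⊓ G M σ y :=
  (G_hom M _ σ hfin le_rfl).1 x y

lemma G_compl (σ : Equiv.Perm ι) (hfin : (msupp σ).Finite) (x : A) :
    G M σ xᶜ = (G M σ x)ᶜ :=
  (G_hom M _ σ hfin le_rfl).2 x

lemma G_top (σ : Equiv.Perm ι) (hfin : (msupp σ).Finite) :
    G M σ (⊤ : A) = ⊤ := by
  have hbot : G M σ (⊥ : A) = ⊥ := by
    have e : (⊤ : A) ⊓ (⊤ : A)ᶜ = ⊥ := inf_compl_eq_bot
    conv_lhs => rw [← e]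
    rw [G_inf M σ hfin, G_compl M σ hfin, inf_compl_eq_bot]
  have e2 : ((⊥ : A))ᶜ = ⊤ := compl_bot
  conv_lhs => rw [← e2]
  rw [G_compl M σ hfin, hbot, compl_bot]

lemma msupp_swap_finite (i j : ι) : (msupp (Equiv.swap i j)).Finite := by
  apply Set.Finite.subset ((Set.finite_singleton j).insert i)
  intro k hk
  rcases eq_or_ne k i with rfl | hki
  · exact Set.mem_insert _ _
  rcases eq_or_ne k j with rfl | hkj
  · exact Set.mem_insert_of_mem _ rfl
  · exact absurd (Equiv.swap_apply_of_ne_of_ne hki hkj) hk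

lemma G_swap {i j : ι} (hij : i ≠ j) : G M (Equiv.swap i j) = M.s i j := by
  have h : ∃ c, (Equiv.swap i j) c ≠ c :=
    ⟨i, by rw [Equiv.swap_apply_left]; exact Ne.symm hij⟩
  have hG := G_unfold M (Equiv.swap i j) (msupp_swap_finite i j) h
  have hc := h.choose_spec
  obtain ⟨c, hcdef⟩ : ∃ c, h.choose = c := ⟨_, rfl⟩
  rw [hcdef] at hG hc
  have hci : c = i ∨ c = j := by
    by_contra h2
    push_neg at h2
    exact hc (Equiv.swap_apply_of_ne_of_ne h2.1 h2.2)
  rcases hci with rfl | rfl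
  · rw [Equiv.swap_apply_left] at hG
    rw [hG, Equiv.swap_mul_self, G_one]
    rfl
  · rw [Equiv.swap_apply_right] at hG
    rw [hG, Equiv.swap_comm c i, Equiv.swap_mul_self, G_one, M.symm i c hij]
    rfl


lemma main_auxA (n : ℕ)
    (IH : ∀ σ : Equiv.Perm ι, (msupp σ).Finite → (msupp σ).ncard ≤ n →
      ∀ i j : ι, i ≠ j → G M (Equiv.swap i j * σ) = M.s i j ∘ G M σ)
    (σ : Equiv.Perm ι) (hfin : (msupp σ).Finite) (hcard : (msupp σ).ncard ≤ n + 1)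
    (i j : ι) (hij : i ≠ j)
    (hc : (Equiv.swap i j * σ) i ≠ i)
    (hG : G M (Equiv.swap i j * σ) = M.s i ((Equiv.swap i j * σ) i) ∘
      G M (Equiv.swap i ((Equiv.swap i j * σ) i) * (Equiv.swap i j * σ))) :
    G M (Equiv.swap i j * σ) = M.s i j ∘ G M σ := by
  have hπi : (Equiv.swap i j * σ) i = Equiv.swap i j (σ i) := Equiv.Perm.mul_apply _ _ _
  by_cases he1 : σ i = i
  · -- then π i = j, stripping the same swap
    have hd : (Equiv.swap i j * σ) i = j := by rw [hπi, he1, Equiv.swap_apply_left]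
    rw [hd] at hG
    have hcancel : Equiv.swap i j * (Equiv.swap i j * σ) = σ := by
      rw [← mul_assoc, Equiv.swap_mul_self, one_mul]
    rw [hcancel] at hG
    exact hG
  by_cases he2 : σ i = j
  · exact absurd (by rw [hπi, he2, Equiv.swap_apply_right]) hc
  · -- main subcase : σ i ∉ {i, j}
    have hei : σ i ≠ i := he1
    have hej : σ i ≠ j := he2
    have hd : (Equiv.swap i j * σ) i = σ i := by
      rw [hπi, Equiv.swap_apply_of_ne_of_ne hei hej]
    rw [hd] at hG
    obtain ⟨hτfin, hτlt⟩ := ncard_lt_of_moved hfin hei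
    have hτcard : (msupp (Equiv.swap i (σ i) * σ)).ncard ≤ n := by omega
    have hperm : Equiv.swap i (σ i) * (Equiv.swap i j * σ) =
        Equiv.swap (σ i) j * (Equiv.swap i (σ i) * σ) := by
      rw [← mul_assoc, ← mul_assoc,
        swap_braid1 i j (σ i) hij (Ne.symm hei) (Ne.symm hej)]
    have hGσ : G M σ = M.s i (σ i) ∘ G M (Equiv.swap i (σ i) * σ) := by
      have hστ : σ = Equiv.swap i (σ i) * (Equiv.swap i (σ i) * σ) := by
        rw [← mul_assoc, Equiv.swap_mul_self, one_mul]
      conv_lhs => rw [hστ]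
      exact IH _ hτfin hτcard i (σ i) (Ne.symm hei)
    have hGτ2 : G M (Equiv.swap (σ i) j * (Equiv.swap i (σ i) * σ)) =
        M.s (σ i) j ∘ G M (Equiv.swap i (σ i) * σ) :=
      IH _ hτfin hτcard (σ i) j hej
    funext x
    rw [hG]
    simp only [Function.comp_apply]
    rw [hperm, hGτ2]
    simp only [Function.comp_apply]
    rw [sD M i (σ i) j (Ne.symm hei) hej hij, hGσ]
    simp only [Function.comp_apply]

lemma main_auxB (n : ℕ)
    (IH : ∀ σ : Equiv.Perm ι, (msupp σ).Finite → (msupp σ).ncard ≤ n →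
      ∀ i j : ι, i ≠ j → G M (Equiv.swap i j * σ) = M.s i j ∘ G M σ)
    (σ : Equiv.Perm ι) (hfin : (msupp σ).Finite) (hcard : (msupp σ).ncard ≤ n + 1)
    (i j : ι) (hij : i ≠ j) (c : ι) (hci : c ≠ i) (hcj : c ≠ j)
    (hc : (Equiv.swap i j * σ) c ≠ c)
    (hG : G M (Equiv.swap i j * σ) = M.s c ((Equiv.swap i j * σ) c) ∘
      G M (Equiv.swap c ((Equiv.swap i j * σ) c) * (Equiv.swap i j * σ))) :
    G M (Equiv.swap i j * σ) = M.s i j ∘ G M σ := by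
  have hπc : (Equiv.swap i j * σ) c = Equiv.swap i j (σ c) := Equiv.Perm.mul_apply _ _ _
  have hσc : σ c ≠ c := by
    intro h'
    exact hc (by rw [hπc, h', Equiv.swap_apply_of_ne_of_ne hci hcj])
  obtain ⟨hτfin, hτlt⟩ := ncard_lt_of_moved hfin hσc
  have hτcard : (msupp (Equiv.swap c (σ c) * σ)).ncard ≤ n := by omega
  have hστ : σ = Equiv.swap c (σ c) * (Equiv.swap c (σ c) * σ) := by
    rw [← mul_assoc, Equiv.swap_mul_self, one_mul]
  have hGσ : G M σ = M.s c (σ c) ∘ G M (Equiv.swap c (σ c) * σ) := by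
    conv_lhs => rw [hστ]
    exact IH _ hτfin hτcard c (σ c) (Ne.symm hσc)
  have hGτ : G M (Equiv.swap i j * (Equiv.swap c (σ c) * σ)) =
      M.s i j ∘ G M (Equiv.swap c (σ c) * σ) :=
    IH _ hτfin hτcard i j hij
  by_cases hσi : σ c = i
  · -- d = j
    have hd : (Equiv.swap i j * σ) c = j := by rw [hπc, hσi, Equiv.swap_apply_left]
    rw [hd] at hG
    have hperm : Equiv.swap c j * (Equiv.swap i j * σ) =
        Equiv.swap i j * (Equiv.swap c (σ c) * σ) := by
      rw [hσi, ← mul_assoc, ← mul_assoc, swap_braid3 c i j hij hci hcj]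
    have key : ∀ y : A, M.s c j (M.s i j y) = M.s i j (M.s c i y) := by
      intro y
      have h1 := sD M j i c hij.symm (Ne.symm hci) (Ne.symm hcj)
      -- h1 : s j i (s i c y) = s j c (s j i y)
      have h1y := h1 y
      rw [M.symm j i hij.symm, M.symm i c (Ne.symm hci), M.symm j c (Ne.symm hcj)]
        at h1y
      exact h1y.symm
    funext x
    rw [hG]
    simp only [Function.comp_apply]
    rw [hperm, hGτ]
    simp only [Function.comp_apply]
    rw [key, hGσ, hσi]
    simp only [Function.comp_apply]
  by_cases hσj : σ c = j
  · -- d = i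
    have hd : (Equiv.swap i j * σ) c = i := by rw [hπc, hσj, Equiv.swap_apply_right]
    rw [hd] at hG
    have hperm : Equiv.swap c i * (Equiv.swap i j * σ) =
        Equiv.swap i j * (Equiv.swap c (σ c) * σ) := by
      rw [hσj, ← mul_assoc, ← mul_assoc, swap_braid2 c i j hij hci hcj]
    have key : ∀ y : A, M.s c i (M.s i j y) = M.s i j (M.s c j y) := by
      intro y
      have h1y := sD M i j c hij (Ne.symm hcj) (Ne.symm hci) y
      -- h1y : s i j (s j c y) = s i c (s i j y)
      rw [M.symm j c (Ne.symm hcj), M.symm i c (Ne.symm hci)] at h1y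
      exact h1y.symm
    funext x
    rw [hG]
    simp only [Function.comp_apply]
    rw [hperm, hGτ]
    simp only [Function.comp_apply]
    rw [key, hGσ, hσj]
    simp only [Function.comp_apply]
  · -- d = σ c, disjoint
    have hd : (Equiv.swap i j * σ) c = σ c := by
      rw [hπc, Equiv.swap_apply_of_ne_of_ne hσi hσj]
    rw [hd] at hG
    have hperm : Equiv.swap c (σ c) * (Equiv.swap i j * σ) =
        Equiv.swap i j * (Equiv.swap c (σ c) * σ) := by
      rw [← mul_assoc, ← mul_assoc, swap_swap_comm c (σ c) i j hci hcj hσi hσj]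
    have key : ∀ y : A, M.s c (σ c) (M.s i j y) = M.s i j (M.s c (σ c) y) :=
      fun y => M.comm c (σ c) i j (Ne.symm hσc) hij hci hcj hσi hσj y
    funext x
    rw [hG]
    simp only [Function.comp_apply]
    rw [hperm, hGτ]
    simp only [Function.comp_apply]
    rw [key, hGσ]
    simp only [Function.comp_apply]

lemma G_swap_mul (n : ℕ) : ∀ σ : Equiv.Perm ι, (msupp σ).Finite → (msupp σ).ncard ≤ n →
    ∀ i j : ι, i ≠ j → G M (Equiv.swap i j * σ) = M.s i j ∘ G M σ := by
  induction n with
  | zero =>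
    intro σ hfin h0 i j hij
    have hemp : msupp σ = ∅ := by rw [← Set.ncard_eq_zero hfin]; omega
    have hσ1 : σ = 1 := by
      ext k
      simp only [Equiv.Perm.one_apply]
      by_contra hk
      exact absurd (hemp ▸ (show k ∈ msupp σ from hk)) (Set.notMem_empty k)
    rw [hσ1, mul_one, G_swap M hij, G_one, Function.comp_id]
  | succ n IH =>
    intro σ hfin hcard i j hij
    by_cases hmv : ∃ c, (Equiv.swap i j * σ) c ≠ c
    · have hπfin : (msupp (Equiv.swap i j * σ)).Finite :=
        (hfin.union ((Set.finite_singleton j).insert i)).subset (msupp_swap_mul_subset' σ i j)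
      have hG := G_unfold M _ hπfin hmv
      have hc := hmv.choose_spec
      obtain ⟨c, hcdef⟩ : ∃ c, hmv.choose = c := ⟨_, rfl⟩
      rw [hcdef] at hG hc
      by_cases hci : c = i
      · rw [hci] at hc hG
        exact main_auxA M n IH σ hfin hcard i j hij hc hG
      by_cases hcj : c = j
      · rw [hcj] at hc hG
        rw [Equiv.swap_comm i j] at hG hc ⊢
        rw [M.symm i j hij]
        exact main_auxA M n IH σ hfin hcard j i hij.symm hc hG
      · exact main_auxB M n IH σ hfin hcard i j hij c hci hcj hc hG
    · have hπ1 : Equiv.swap i j * σ = 1 := by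
        ext k
        simp only [Equiv.Perm.one_apply]
        by_contra hk
        exact hmv ⟨k, hk⟩
      have hσ : σ = Equiv.swap i j := by
        have h2 : Equiv.swap i j * (Equiv.swap i j * σ) = Equiv.swap i j * 1 := by rw [hπ1]
        rwa [← mul_assoc, Equiv.swap_mul_self, one_mul, mul_one] at h2
      rw [hπ1, hσ, G_one, G_swap M hij]
      funext x
      exact (M.invol i j hij x).symm

lemma G_swap_mul' (σ : Equiv.Perm ι) (hfin : (msupp σ).Finite)
    {i j : ι} (hij : i ≠ j) : G M (Equiv.swap i j * σ) = M.s i j ∘ G M σ :=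
  G_swap_mul M (msupp σ).ncard σ hfin le_rfl i j hij

lemma G_mul_swap (n : ℕ) : ∀ σ : Equiv.Perm ι, (msupp σ).Finite → (msupp σ).ncard ≤ n →
    ∀ i j : ι, i ≠ j → G M (σ * Equiv.swap i j) = G M σ ∘ M.s i j := by
  induction n with
  | zero =>
    intro σ hfin h0 i j hij
    have hemp : msupp σ = ∅ := by rw [← Set.ncard_eq_zero hfin]; omega
    have hσ1 : σ = 1 := by
      ext k
      simp only [Equiv.Perm.one_apply]
      by_contra hk
      exact absurd (hemp ▸ (show k ∈ msupp σ from hk)) (Set.notMem_empty k)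
    rw [hσ1, one_mul, G_swap M hij, G_one, Function.id_comp]
  | succ n IH =>
    intro σ hfin hcard i j hij
    by_cases h : ∃ c, σ c ≠ c
    · have hG := G_unfold M σ hfin h
      have hc := h.choose_spec
      obtain ⟨c, hcdef⟩ : ∃ c, h.choose = c := ⟨_, rfl⟩
      rw [hcdef] at hG hc
      obtain ⟨hτfin, hτlt⟩ := ncard_lt_of_moved hfin hc
      have hτswapfin : (msupp ((Equiv.swap c (σ c) * σ) * Equiv.swap i j)).Finite :=
        (hτfin.union ((Set.finite_singleton j).insert i)).subset
          (msupp_mul_swap_subset _ i j)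
      have hperm : σ * Equiv.swap i j =
          Equiv.swap c (σ c) * ((Equiv.swap c (σ c) * σ) * Equiv.swap i j) := by
        rw [← mul_assoc, ← mul_assoc, Equiv.swap_mul_self, one_mul]
      rw [hperm, G_swap_mul' M _ hτswapfin (Ne.symm hc),
        IH _ hτfin (by omega) i j hij, hG]
      rfl

    · have hσ1 : σ = 1 := by
        ext k
        simp only [Equiv.Perm.one_apply]
        by_contra hk
        exact h ⟨k, hk⟩
      rw [hσ1, one_mul, G_swap M hij, G_one, Function.id_comp]


lemma exists_ultra (a : A) (ha : a ≠ ⊥) :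
    ∃ U : Set A, a ∈ U ∧ (⊤ : A) ∈ U ∧
      (∀ x y : A, x ⊓ y ∈ U ↔ x ∈ U ∧ y ∈ U) ∧ (∀ x : A, xᶜ ∈ U ↔ x ∉ U) := by
  classical
  set Good : Set (Set A) :=
    {f | a ∈ f ∧ ⊥ ∉ f ∧ (∀ x ∈ f, ∀ y ∈ f, x ⊓ y ∈ f) ∧ (∀ x ∈ f, ∀ y : A, x ≤ y → y ∈ f)}
    with hGooddef
  have hbase : {x : A | a ≤ x} ∈ Good := by
    refine ⟨le_refl a, fun hb => ha (le_bot_iff.mp hb), ?_, ?_⟩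
    · intro x hx y hy; exact le_inf hx hy
    · intro x hx y hxy; exact le_trans hx hxy
  obtain ⟨U, hbaseU, hU⟩ := zorn_subset_nonempty Good (by
    intro c hcG hchain hcne
    refine ⟨⋃₀ c, ?_, fun s hs => Set.subset_sUnion_of_mem hs⟩
    obtain ⟨f0, hf0⟩ := hcne
    refine ⟨⟨f0, hf0, (hcG hf0).1⟩, ?_, ?_, ?_⟩
    · rintro ⟨f, hf, hbot⟩
      exact (hcG hf).2.1 hbot
    · rintro x ⟨f, hf, hx⟩ y ⟨g, hg, hy⟩
      rcases eq_or_ne f g with rfl | hne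
      · exact ⟨f, hf, (hcG hf).2.2.1 x hx y hy⟩
      · rcases hchain hf hg hne with hle | hle
        · exact ⟨g, hg, (hcG hg).2.2.1 x (hle hx) y hy⟩
        · exact ⟨f, hf, (hcG hf).2.2.1 x hx y (hle hy)⟩
    · rintro x ⟨f, hf, hx⟩ y hxy
      exact ⟨f, hf, (hcG hf).2.2.2 x hx y hxy⟩) _ hbase
  obtain ⟨haU, hbotU, hinfU, hupU⟩ := hU.1
  have htopU : (⊤ : A) ∈ U := hupU a haU ⊤ le_top
  refine ⟨U, haU, htopU, ?_, ?_⟩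
  · intro x y
    constructor
    · intro h
      exact ⟨hupU _ h x inf_le_left, hupU _ h y inf_le_right⟩
    · intro ⟨hx, hy⟩
      exact hinfU x hx y hy
  · intro x
    constructor
    · intro hxc hx
      have h2 : x ⊓ xᶜ ∈ U := hinfU x hx xᶜ hxc
      rw [inf_compl_eq_bot] at h2
      exact hbotU h2
    · intro hx
      set U' : Set A := {y | ∃ u ∈ U, u ⊓ xᶜ ≤ y} with hU'def
      have hUU' : U ⊆ U' := fun u hu => ⟨u, hu, inf_le_left⟩
      have hbot' : ⊥ ∉ U' := by
        rintro ⟨u, hu, hle⟩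
        have heq : u ⊓ xᶜ = ⊥ := le_bot_iff.mp hle
        have hux : u ≤ x := by
          calc u = u ⊓ ⊤ := (inf_top_eq u).symm
            _ = u ⊓ (x ⊔ xᶜ) := by rw [sup_compl_eq_top]
            _ = (u ⊓ x) ⊔ (u ⊓ xᶜ) := inf_sup_left u x xᶜ
            _ ≤ x := sup_le inf_le_right (by rw [heq]; exact bot_le)
        exact hx (hupU u hu x hux)
      have hGood' : U' ∈ Good := by
        refine ⟨hUU' haU, hbot', ?_, ?_⟩
        · rintro y ⟨u, hu, hle⟩ z ⟨v, hv, hle'⟩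
          refine ⟨u ⊓ v, hinfU u hu v hv, ?_⟩
          calc (u ⊓ v) ⊓ xᶜ ≤ (u ⊓ xᶜ) ⊓ (v ⊓ xᶜ) :=
                le_inf (inf_le_inf inf_le_left le_rfl) (inf_le_inf inf_le_right le_rfl)
            _ ≤ y ⊓ z := inf_le_inf hle hle'
        · rintro y ⟨u, hu, hle⟩ z hyz
          exact ⟨u, hu, hle.trans hyz⟩
      have hsub : U' ⊆ U := hU.2 hGood' hUU'
      exact hsub ⟨a, haU, inf_le_right⟩

end TARep

/-- infinite-dimensional representation: for an infinite dimension `ι`,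
every nonzero element of a transposition algebra of dimension `ι` is separated from zero
by a homomorphism into `𝒫(S)`, where `S` is the permutable set of finitely supported
bijections of `ι`. -/
theorem transpositionAlgebra_representation_infinite_dim
    (ι : Type*) [Infinite ι] [DecidableEq ι]
    {A : Type*} [BooleanAlgebra A] (M : TranspositionAlgebra ι A)
    (a : A) (ha : a ≠ ⊥) :
    ∃ h : A → Set (ι → ι),
      (∀ x : A, h x ⊆ {σ : ι → ι | Function.Bijective σ ∧ {i : ι | σ i ≠ i}.Finite}) ∧
      h a ≠ ∅ ∧
      (∀ x y : A, h (x ⊓ y) = h x ∩ h y) ∧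
      (∀ x : A, h xᶜ =
        {σ : ι → ι | Function.Bijective σ ∧ {i : ι | σ i ≠ i}.Finite} \ h x) ∧
      h ⊤ = {σ : ι → ι | Function.Bijective σ ∧ {i : ι | σ i ≠ i}.Finite} ∧
      (∀ i j : ι, i ≠ j → ∀ x : A,
        h (M.s i j x) = {σ : ι → ι |
          (Function.Bijective σ ∧ {i : ι | σ i ≠ i}.Finite) ∧
            σ ∘ (Equiv.swap i j) ∈ h x}) := by
  classical
  obtain ⟨U, haU, htopU, hinfU, hcomplU⟩ := TARep.exists_ultra a ha
  refine ⟨fun x => {σ : ι → ι | ∃ e : Equiv.Perm ι, ⇑e = σ ∧ (TARep.msupp e).Finite ∧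
    TARep.G M e x ∈ U}, ?_, ?_, ?_, ?_, ?_, ?_⟩
  · rintro x σ ⟨e, rfl, hfin, _⟩
    exact ⟨e.bijective, hfin⟩
  · rw [← Set.nonempty_iff_ne_empty]
    refine ⟨⇑(1 : Equiv.Perm ι), 1, rfl, ?_, ?_⟩
    · apply Set.finite_empty.subset
      intro k hk
      exact absurd rfl hk
    · rw [TARep.G_one]
      exact haU
  · intro x y
    ext σ
    constructor
    · rintro ⟨e, rfl, hfin, hmem⟩
      rw [TARep.G_inf M e hfin] at hmem
      obtain ⟨h1, h2⟩ := (hinfU _ _).mp hmem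
      exact ⟨⟨e, rfl, hfin, h1⟩, ⟨e, rfl, hfin, h2⟩⟩
    · rintro ⟨⟨e, he, hfin, hx⟩, ⟨e', he', hfin', hy⟩⟩
      have hee : e' = e := Equiv.coe_fn_injective (he'.trans he.symm)
      rw [hee] at hy
      exact ⟨e, he, hfin, by rw [TARep.G_inf M e hfin]; exact (hinfU _ _).mpr ⟨hx, hy⟩⟩
  · intro x
    ext σ
    constructor
    · rintro ⟨e, rfl, hfin, hmem⟩
      refine ⟨⟨e.bijective, hfin⟩, ?_⟩
      rintro ⟨e', he', hfin', hx⟩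
      have hee : e' = e := Equiv.coe_fn_injective he'
      rw [hee] at hx
      rw [TARep.G_compl M e hfin] at hmem
      exact (hcomplU _).mp hmem hx
    · rintro ⟨⟨hbij, hfin⟩, hnot⟩
      have hfine : (TARep.msupp (Equiv.ofBijective σ hbij)).Finite := hfin
      refine ⟨Equiv.ofBijective σ hbij, rfl, hfine, ?_⟩
      rw [TARep.G_compl M _ hfine]
      refine (hcomplU _).mpr ?_
      intro hx
      exact hnot ⟨Equiv.ofBijective σ hbij, rfl, hfin, hx⟩
  · ext σ
    constructor
    · rintro ⟨e, rfl, hfin, _⟩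
      exact ⟨e.bijective, hfin⟩
    · rintro ⟨hbij, hfin⟩
      have hfine : (TARep.msupp (Equiv.ofBijective σ hbij)).Finite := hfin
      refine ⟨Equiv.ofBijective σ hbij, rfl, hfine, ?_⟩
      rw [TARep.G_top M _ hfine]
      exact htopU
  · intro i j hij x
    ext σ
    constructor
    · rintro ⟨e, rfl, hfin, hmem⟩
      refine ⟨⟨e.bijective, hfin⟩, ?_⟩
      refine ⟨e * Equiv.swap i j, rfl, ?_, ?_⟩
      · exact ((hfin.union ((Set.finite_singleton j).insert i)).subset
          (TARep.msupp_mul_swap_subset e i j))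
      · rw [TARep.G_mul_swap M (TARep.msupp e).ncard e hfin le_rfl i j hij]
        exact hmem
    · rintro ⟨⟨hbij, hfin⟩, ⟨e', he', hfin', hx⟩⟩
      refine ⟨e' * Equiv.swap i j, ?_, ?_, ?_⟩
      · funext k
        have h1 : e' (Equiv.swap i j k) = σ (Equiv.swap i j (Equiv.swap i j k)) :=
          congrFun he' (Equiv.swap i j k)
        rw [Equiv.swap_apply_self] at h1
        exact h1
      · exact ((hfin'.union ((Set.finite_singleton j).insert i)).subset
          (TARep.msupp_mul_swap_subset e' i j))
      · rw [TARep.G_mul_swap M (TARep.msupp e').ncard e' hfin' le_rfl i j hij]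
        simp only [Function.comp_apply]
        rw [M.invol i j hij]
        exact hx
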